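/- Let d ∈ ℕ, K > 0 and define the arithmetic basket put payoff w(x) = max(K − Σ_{h=1}^d e^{x_h}, 0) for x ∈ ℝ^d. Then for every z = (z_1,…,z_d) ∈ ℂ^d with Im z_h < 0 for all h, the function x ↦ e^{i z·x} w(x) is integrable on ℝ^d and ∫_{ℝ^d} e^{i z·x} w(x) dx = K^{(1 + i Σ_{h=1}^d z_h)} · ( ∏_{h=1}^d Γ(i z_h) ) / Γ( i Σ_{h=1}^d z_h + 2 ), where Γ is the complex Gamma function and K^w := exp(w log K) for w ∈ ℂ. -/

import Mathlib

open MeasureTheory Filter Finset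

noncomputable section

/-- Euclidean norm on `Fin d → ℝ`. -/
def euclNorm {d : ℕ} (x : Fin d → ℝ) : ℝ := Real.sqrt (∑ h, (x h) ^ 2)

/-- Tensor cosine basis function `e_k` associated to the box `[-L, L]`. -/
def cosBasis {d : ℕ} (L : Fin d → ℝ) (k : Fin d → ℕ) (x : Fin d → ℝ) : ℝ :=
  ∏ h, Real.cos ((k h : ℝ) * Real.pi * (x h + L h) / (2 * L h))

/-- Weight `2^{-Λ(k)}` where `Λ(k)` is the number of zero components of `k`;
used in the primed sums `Σ'`. -/
def wt {d : ℕ} (k : Fin d → ℕ) : ℝ :=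
  (1 / 2 : ℝ) ^ (Finset.univ.filter (fun h => k h = 0)).card

/-- Fourier transform `f̂(u) = ∫ f(x) e^{i u·x} dx`. -/
def fourierT {d : ℕ} (f : (Fin d → ℝ) → ℝ) (u : Fin d → ℝ) : ℂ :=
  ∫ x : Fin d → ℝ, (f x : ℂ) * Complex.exp (Complex.I * (∑ h, (u h : ℂ) * (x h : ℂ)))

/-- The quantity `B_f(L)` from the definition of COS-admissibility. -/
def Bf {d : ℕ} (f : (Fin d → ℝ) → ℝ) (L : Fin d → ℝ) : ℝ :=
  ∑' k : Fin d → ℕ, wt k * (∏ h, L h)⁻¹ *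
    (∫ x in (Set.Icc (-L) L)ᶜ, f x * cosBasis L k x) ^ 2

/-- COS-admissibility: `B_f(L) → 0` as `min_h L_h → ∞`, i.e. as all components
of `L` tend to infinity. -/
def COSAdmissible {d : ℕ} (f : (Fin d → ℝ) → ℝ) : Prop :=
  Filter.Tendsto (fun L : Fin d → ℝ => Bf f L) Filter.atTop (nhds 0)

/-- Sign vectors `s ∈ {1} × {-1,1}^{d-1}`, encoded as boolean vectors whose first
component is `true`. -/
def signSet (d : ℕ) : Finset (Fin d → Bool) :=
  Finset.univ.filter fun σ => ∀ h : Fin d, (h : ℕ) = 0 → σ h = true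

/-- The sign `±1` associated to a boolean. -/
def sgn {d : ℕ} (σ : Fin d → Bool) (h : Fin d) : ℝ := if σ h then 1 else -1

/-- COS coefficients computed from a (possibly approximate) Fourier transform `ϑ`:
`c_k = (2^{d-1} ∏_h L_h)⁻¹ Σ_s Re{ ϑ(π s k/(2L)) exp(i (π/2) s·k) }`. -/
def cosCoef {d : ℕ} (ϑ : (Fin d → ℝ) → ℂ) (L : Fin d → ℝ) (k : Fin d → ℕ) : ℝ :=
  ((2 : ℝ) ^ (d - 1) * ∏ h, L h)⁻¹ *
    ∑ σ ∈ signSet d,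
      (ϑ (fun h => Real.pi * (sgn σ h * (k h : ℝ)) / (2 * L h)) *
        Complex.exp (Complex.I * ((Real.pi : ℂ) / 2) *
          ((∑ h, sgn σ h * (k h : ℝ) : ℝ) : ℂ))).re

/-- Classical Fourier-cosine coefficients `a_k` of `f·1_{[-L,L]}`. -/
def aCoef {d : ℕ} (f : (Fin d → ℝ) → ℝ) (L : Fin d → ℝ) (k : Fin d → ℕ) : ℝ :=
  (∏ h, L h)⁻¹ * ∫ x in Set.Icc (-L) L, f x * cosBasis L k x

/-- The constant `Ξ = (π²/3) Σ_{h=1}^d (π²/3 + 1)^{h-1}`. -/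
def Xi (d : ℕ) : ℝ :=
  Real.pi ^ 2 / 3 * ∑ h ∈ Finset.range d, (Real.pi ^ 2 / 3 + 1) ^ h

/-- A function decays exponentially if `|f(x)| ≤ C₁ e^{-C₂ |x|}` for `|x| > m`. -/
def DecaysExp {d : ℕ} (f : (Fin d → ℝ) → ℝ) : Prop :=
  ∃ C₁ C₂ m : ℝ, 0 < C₁ ∧ 0 < C₂ ∧ 0 < m ∧
    ∀ x, m < euclNorm x → |f x| ≤ C₁ * Real.exp (-C₂ * euclNorm x)


section BasketAux

open MeasureTheory Set Complex

lemma lemA {K : ℝ} (hK : 0 < K) {z p : ℂ} (hz : z.im < 0) (hp : 0 < p.re) :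
    Integrable (fun x : ℝ =>
        Complex.exp (Complex.I * (z * x)) * ((max (K - Real.exp x) 0 : ℝ) : ℂ) ^ p) ∧
    (∫ x : ℝ, Complex.exp (Complex.I * (z * x)) * ((max (K - Real.exp x) 0 : ℝ) : ℂ) ^ p)
      = (K : ℂ) ^ (p + Complex.I * z) *
        (Complex.Gamma (Complex.I * z) * Complex.Gamma (p + 1) /
          Complex.Gamma (Complex.I * z + p + 1)) := by
  set u : ℂ := Complex.I * z with hu_def
  have hu : 0 < u.re := by simp [hu_def, Complex.mul_re]; linarith
  have hp0 : p ≠ 0 := fun h => by simp [h] at hp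
  have hv : 0 < (p + 1).re := by simp [Complex.add_re]; linarith
  set F : ℝ → ℂ := fun t => (t : ℂ) ^ (u - 1) * ((max (K - t) 0 : ℝ) : ℂ) ^ p with hF_def
  -- pointwise substitution identity
  have hpt : ∀ x : ℝ, |Real.exp x| • F (Real.exp x)
      = Complex.exp (Complex.I * (z * x)) * ((max (K - Real.exp x) 0 : ℝ) : ℂ) ^ p := by
    intro x
    have h1 : ((Real.exp x : ℝ) : ℂ) = Complex.exp (x : ℂ) := Complex.ofReal_exp x
    have h2 : ((Real.exp x : ℝ) : ℂ) ^ (u - 1) = Complex.exp ((x : ℂ) * (u - 1)) := by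
      rw [h1, Complex.cpow_def_of_ne_zero (Complex.exp_ne_zero _), Complex.log_exp]
      · simp [Real.pi_pos]
      · simp [Real.pi_pos.le]
    rw [abs_of_pos (Real.exp_pos x)]
    rw [hF_def]
    simp only [real_smul]
    rw [h2, h1, ← mul_assoc, ← Complex.exp_add]
    congr 2
    ring
  have hderiv : ∀ x ∈ (univ : Set ℝ), HasDerivWithinAt Real.exp (Real.exp x) univ x :=
    fun x _ => (Real.hasDerivAt_exp x).hasDerivWithinAt
  have hinj : InjOn Real.exp univ := Real.exp_injective.injOn
  have himg : Real.exp '' univ = Ioi (0:ℝ) := by rw [image_univ, Real.range_exp]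
  -- F vanishes on Ioi K
  have hF0 : ∀ t ∈ Ioi K, F t = 0 := by
    intro t ht
    have : max (K - t) 0 = 0 := max_eq_right (by simp at ht; linarith)
    simp [hF_def, this, Complex.zero_cpow hp0]
  -- F on Ioc 0 K equals the scaled beta integrand
  have hFeq : ∀ t ∈ Ioc (0:ℝ) K, F t = (t : ℂ) ^ (u - 1) * ((K : ℂ) - t) ^ ((p+1) - 1) := by
    intro t ht
    have h1 : max (K - t) 0 = K - t := max_eq_left (by linarith [ht.2])
    simp [hF_def, h1, Complex.ofReal_sub]
  -- integrability of F on Ioc 0 K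
  have hbeta : IntervalIntegrable
      (fun t : ℝ => (t : ℂ) ^ (u - 1) * (1 - (t : ℂ)) ^ ((p+1) - 1)) volume 0 1 :=
    Complex.betaIntegral_convergent hu hv
  have h2 : IntervalIntegrable
      (fun t : ℝ => ((t * K⁻¹ : ℝ) : ℂ) ^ (u - 1) * (1 - ((t * K⁻¹ : ℝ) : ℂ)) ^ ((p+1) - 1))
      volume 0 K := by
    have := hbeta.comp_mul_right (c := K⁻¹) enorm_ne_top enorm_ne_top
    simpa [hK.ne', one_div, inv_inv] using this
  -- key pointwise scaling identity on Ioc 0 K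
  have hscale : ∀ t ∈ Ioc (0:ℝ) K, F t
      = ((K:ℂ) ^ (u-1) * (K:ℂ) ^ ((p+1)-1)) *
        (((t * K⁻¹ : ℝ) : ℂ) ^ (u - 1) * (1 - ((t * K⁻¹ : ℝ) : ℂ)) ^ ((p+1) - 1)) := by
    intro t ht
    have htK : 0 ≤ t * K⁻¹ := mul_nonneg ht.1.le (inv_nonneg.2 hK.le)
    have htK1 : 0 ≤ 1 - t * K⁻¹ := by
      rw [sub_nonneg]
      rw [mul_inv_le_iff₀ hK, one_mul]
      exact ht.2
    have hKc : (K:ℂ) ≠ 0 := Complex.ofReal_ne_zero.2 hK.ne'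
    have e1 : (t:ℂ) ^ (u-1) = (K:ℂ)^(u-1) * ((t*K⁻¹:ℝ):ℂ)^(u-1) := by
      rw [← mul_cpow_ofReal_nonneg hK.le htK]
      congr 2
      push_cast
      field_simp
    have e2 : ((K:ℂ) - t) ^ ((p+1)-1) = (K:ℂ)^((p+1)-1) * ((1 - t*K⁻¹:ℝ):ℂ)^((p+1)-1) := by
      rw [← mul_cpow_ofReal_nonneg hK.le htK1]
      congr 2
      push_cast
      rw [mul_sub, mul_one, mul_comm (K:ℂ), mul_assoc, inv_mul_cancel₀ hKc, mul_one]
    rw [hFeq t ht, e1, e2]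
    push_cast
    ring
  have h3 : IntegrableOn F (Ioc 0 K) := by
    have h2' : IntegrableOn (fun t : ℝ => ((K:ℂ) ^ (u-1) * (K:ℂ) ^ ((p+1)-1)) *
        (((t * K⁻¹ : ℝ) : ℂ) ^ (u - 1) * (1 - ((t * K⁻¹ : ℝ) : ℂ)) ^ ((p+1) - 1)))
        (Ioc 0 K) := (h2.const_mul _).1
    exact (integrableOn_congr_fun hscale measurableSet_Ioc).2 h2'
  have h4 : IntegrableOn F (Ioi 0) := by
    rw [← Ioc_union_Ioi_eq_Ioi hK.le]
    refine h3.union ?_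
    exact (integrableOn_congr_fun hF0 measurableSet_Ioi).2 (integrableOn_zero)
  -- integrability of the original function
  have hint : Integrable (fun x : ℝ =>
      Complex.exp (Complex.I * (z * x)) * ((max (K - Real.exp x) 0 : ℝ) : ℂ) ^ p) := by
    have := (integrableOn_image_iff_integrableOn_abs_deriv_smul MeasurableSet.univ
      hderiv hinj F)
    rw [himg] at this
    have h5 := this.1 h4
    rw [integrableOn_univ] at h5
    exact h5.congr (Filter.Eventually.of_forall hpt)
  refine ⟨hint, ?_⟩
  -- value
  have himgeq := integral_image_eq_integral_abs_deriv_smul MeasurableSet.univ hderiv hinj F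
  rw [himg] at himgeq
  have hval1 : (∫ x : ℝ, Complex.exp (Complex.I * (z * x)) * ((max (K - Real.exp x) 0 : ℝ) : ℂ) ^ p)
      = ∫ t in Ioi (0:ℝ), F t := by
    rw [himgeq, MeasureTheory.setIntegral_univ]
    exact integral_congr_ae (Filter.Eventually.of_forall fun x => (hpt x).symm)
  have hval2 : (∫ t in Ioi (0:ℝ), F t) = ∫ t in Ioc (0:ℝ) K, F t := by
    rw [← Ioc_union_Ioi_eq_Ioi hK.le,
      setIntegral_union (Ioc_disjoint_Ioi le_rfl) measurableSet_Ioi h3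
        ((integrableOn_congr_fun hF0 measurableSet_Ioi).2 integrableOn_zero),
      setIntegral_congr_fun measurableSet_Ioi hF0]
    simp
  have hval3 : (∫ t in Ioc (0:ℝ) K, F t)
      = ∫ t in (0:ℝ)..K, (t:ℂ)^(u-1) * ((K:ℂ)-t)^((p+1)-1) := by
    rw [intervalIntegral.integral_of_le hK.le]
    exact setIntegral_congr_fun measurableSet_Ioc hFeq
  rw [hval1, hval2, hval3, Complex.betaIntegral_scaled u (p+1) hK]
  have hGne : Complex.Gamma (u + (p+1)) ≠ 0 :=
    Complex.Gamma_ne_zero_of_re_pos (by simp [Complex.add_re]; linarith)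
  have hbeta_eq : Complex.betaIntegral u (p+1)
      = Complex.Gamma u * Complex.Gamma (p+1) / Complex.Gamma (u+(p+1)) := by
    field_simp
    rw [Complex.Gamma_mul_Gamma_eq_betaIntegral hu hv]
    ring
  rw [hbeta_eq]
  have e3 : u + (p+1) - 1 = p + u := by ring
  have e4 : u + (p+1) = u + p + 1 := by ring
  rw [e3, e4]

lemma lemB : ∀ (d : ℕ) (p : ℂ), 0 < p.re → ∀ (K : ℝ), 0 < K →
    ∀ (z : Fin d → ℂ), (∀ h, (z h).im < 0) →
    Integrable (fun x : Fin d → ℝ =>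
      Complex.exp (Complex.I * ∑ h, z h * (x h : ℂ)) *
        ((max (K - ∑ h, Real.exp (x h)) 0 : ℝ) : ℂ) ^ p) ∧
    (∫ x : Fin d → ℝ, Complex.exp (Complex.I * ∑ h, z h * (x h : ℂ)) *
        ((max (K - ∑ h, Real.exp (x h)) 0 : ℝ) : ℂ) ^ p)
      = (K : ℂ) ^ (p + Complex.I * ∑ h, z h) *
        (Complex.Gamma (p + 1) * (∏ h, Complex.Gamma (Complex.I * z h)) /
          Complex.Gamma (Complex.I * (∑ h, z h) + p + 1)) := by
  intro d
  induction d with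
  | zero =>
    intro p hp K hK z hz
    have hΓ : Complex.Gamma (p + 1) ≠ 0 :=
      Complex.Gamma_ne_zero_of_re_pos (by simp [Complex.add_re]; linarith)
    have hfconst : (fun x : Fin 0 → ℝ =>
        Complex.exp (Complex.I * ∑ h, z h * (x h : ℂ)) *
          ((max (K - ∑ h, Real.exp (x h)) 0 : ℝ) : ℂ) ^ p)
        = fun _ => (K : ℂ) ^ p := by
      funext x
      simp [Finset.univ_eq_empty, max_eq_left hK.le]
    have hvol : (volume : Measure (Fin 0 → ℝ)) = Measure.dirac (isEmptyElim) :=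
      MeasureTheory.Measure.volume_pi_eq_dirac _
    constructor
    · rw [hfconst, hvol]
      exact integrable_const _
    · rw [hfconst, hvol, integral_dirac' _ _ stronglyMeasurable_const]
      simp [Finset.univ_eq_empty, div_self hΓ]
  | succ d IH =>
    intro p hp K hK z hz
    have hp0 : p ≠ 0 := fun h => by simp [h] at hp
    set z0 : ℂ := z 0 with hz0_def
    set zt : Fin d → ℂ := fun h => z h.succ with hzt_def
    have hzt : ∀ h, (zt h).im < 0 := fun h => hz h.succ
    set S : ℂ := ∑ h, zt h with hS_def
    set g : ℝ × (Fin d → ℝ) → ℂ := fun q =>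
      Complex.exp (Complex.I * (z0 * q.1)) *
        (Complex.exp (Complex.I * ∑ h, zt h * (q.2 h : ℂ)) *
          ((max ((K - Real.exp q.1) - ∑ h, Real.exp (q.2 h)) 0 : ℝ) : ℂ) ^ p) with hg_def
    have hmp := (volume_preserving_piFinSuccAbove (fun _ : Fin (d+1) => ℝ) 0).symm
    -- the composed function equals g
    have hcomp : ∀ q : ℝ × (Fin d → ℝ),
        (Complex.exp (Complex.I * ∑ h, z h * (((MeasurableEquiv.piFinSuccAbove (fun _ : Fin (d+1) => ℝ) 0).symm q) h : ℂ)) *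
          ((max (K - ∑ h, Real.exp (((MeasurableEquiv.piFinSuccAbove (fun _ : Fin (d+1) => ℝ) 0).symm q) h)) 0 : ℝ) : ℂ) ^ p)
        = g q := by
      rintro ⟨y, x⟩
      have hv0 : ((MeasurableEquiv.piFinSuccAbove (fun _ : Fin (d+1) => ℝ) 0).symm (y, x)) 0 = y := by
        simp [MeasurableEquiv.piFinSuccAbove_symm_apply]
      have hvs : ∀ j : Fin d, ((MeasurableEquiv.piFinSuccAbove (fun _ : Fin (d+1) => ℝ) 0).symm (y, x)) j.succ = x j := by
        intro j
        simp [MeasurableEquiv.piFinSuccAbove_symm_apply, Fin.zero_succAbove]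
      rw [Fin.sum_univ_succ (f := fun h => z h * (((MeasurableEquiv.piFinSuccAbove (fun _ : Fin (d+1) => ℝ) 0).symm (y, x)) h : ℂ)),
        Fin.sum_univ_succ (f := fun h => Real.exp (((MeasurableEquiv.piFinSuccAbove (fun _ : Fin (d+1) => ℝ) 0).symm (y, x)) h))]
      simp only [hv0, hvs]
      rw [mul_add, Complex.exp_add]
      simp only [hg_def, hzt_def, hz0_def]
      rw [mul_assoc]
      congr 2
      ring_nf
    -- continuity of g
    have hcont : Continuous g := by
      apply Continuous.mul
      · exact Complex.continuous_exp.comp (by fun_prop)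
      apply Continuous.mul
      · apply Complex.continuous_exp.comp
        apply continuous_const.mul
        apply continuous_finset_sum
        intro h _
        exact continuous_const.mul (Complex.continuous_ofReal.comp ((continuous_apply h).comp continuous_snd))
      · apply (Complex.continuous_ofReal_cpow_const hp).comp
        apply Continuous.max _ continuous_const
        apply Continuous.sub
        · exact (continuous_const.sub (Real.continuous_exp.comp continuous_fst))
        · exact continuous_finset_sum _ fun h _ =>
            Real.continuous_exp.comp ((continuous_apply h).comp continuous_snd)
    -- the integrand vanishes when the strike is nonpositive
    have hzero : ∀ (K' : ℝ), K' ≤ 0 → ∀ x : Fin d → ℝ,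
        Complex.exp (Complex.I * ∑ h, zt h * (x h : ℂ)) *
          ((max (K' - ∑ h, Real.exp (x h)) 0 : ℝ) : ℂ) ^ p = 0 := by
      intro K' hK' x
      have hs : (0:ℝ) ≤ ∑ h, Real.exp (x h) :=
        Finset.sum_nonneg fun h _ => (Real.exp_pos _).le
      have hm : max (K' - ∑ h, Real.exp (x h)) 0 = 0 := max_eq_right (by linarith)
      rw [hm]
      simp [Complex.zero_cpow hp0]
    -- condition 1 : each slice is integrable
    have hcond1 : ∀ y : ℝ, Integrable (fun x : Fin d → ℝ => g (y, x)) := by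
      intro y
      by_cases hK' : 0 < K - Real.exp y
      · have := (IH p hp (K - Real.exp y) hK' zt hzt).1.const_mul
          (Complex.exp (Complex.I * (z0 * y)))
        simpa only [hg_def] using this
      · have h0 : (fun x : Fin d → ℝ => g (y, x)) = fun _ => 0 := by
          funext x
          simp only [hg_def]
          rw [hzero _ (by linarith) x, mul_zero]
        rw [h0]
        exact integrable_zero _ _ _
    -- real-parameter quantities
    set a : Fin d → ℝ := fun h => -((zt h).im) with ha_def
    have ha : ∀ h, 0 < a h := fun h => by simp [ha_def]; linarith [hzt h]
    set zr : Fin d → ℂ := fun h => Complex.I * (((zt h).im : ℝ) : ℂ) with hzr_def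
    have hzr : ∀ h, (zr h).im < 0 := fun h => by
      simp [hzr_def, Complex.mul_im]
      exact hzt h
    have hIzr : ∀ h, Complex.I * zr h = ((a h : ℝ) : ℂ) := by
      intro h
      rw [hzr_def, ← mul_assoc, Complex.I_mul_I, ha_def]
      push_cast
      ring
    set A : ℝ := ∑ h, a h with hA_def
    have hA : 0 ≤ A := Finset.sum_nonneg fun h _ => (ha h).le
    set q : ℝ := p.re + A with hq_def
    have hq : 0 < q := by simp only [hq_def]; linarith
    have hpre : (0:ℝ) < ((p.re : ℝ) : ℂ).re := by simp [hp]
    -- sums with zr are real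
    have hIsum : ∀ c : Fin d → ℝ, Complex.I * (∑ h, zr h * (c h : ℂ))
        = ((∑ h, a h * c h : ℝ) : ℂ) := by
      intro c
      rw [Finset.mul_sum]
      push_cast
      refine Finset.sum_congr rfl fun h _ => ?_
      rw [← mul_assoc, ← mul_assoc, Complex.I_mul_I]
      simp [ha_def]
    have hIsum1 : Complex.I * (∑ h, zr h) = ((A : ℝ) : ℂ) := by
      rw [Finset.mul_sum, hA_def]
      push_cast
      exact Finset.sum_congr rfl fun h _ => hIzr h
    -- the real constant
    set cR : ℝ := Real.Gamma (p.re + 1) * (∏ h, Real.Gamma (a h)) /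
        Real.Gamma (A + p.re + 1) with hcR_def
    -- norm of inner integrand
    have hnorm : ∀ (K' : ℝ) (x : Fin d → ℝ),
        ‖Complex.exp (Complex.I * ∑ h, zt h * (x h : ℂ)) *
          ((max (K' - ∑ h, Real.exp (x h)) 0 : ℝ) : ℂ) ^ p‖
        = Real.exp (∑ h, a h * x h) * (max (K' - ∑ h, Real.exp (x h)) 0) ^ p.re := by
      intro K' x
      rw [norm_mul, Complex.norm_exp,
        Complex.norm_cpow_eq_rpow_re_of_nonneg (le_max_right _ _) (ne_of_gt hp)]
      congr 2
      rw [Complex.mul_re, Complex.I_re, Complex.I_im, Complex.im_sum]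
      simp only [zero_mul, one_mul, zero_sub]
      rw [← Finset.sum_neg_distrib]
      refine Finset.sum_congr rfl fun h _ => ?_
      simp [ha_def, Complex.mul_im]
    -- cast identity
    have hcast : ∀ (K' : ℝ) (x : Fin d → ℝ),
        ((Real.exp (∑ h, a h * x h) * (max (K' - ∑ h, Real.exp (x h)) 0) ^ p.re : ℝ) : ℂ)
        = Complex.exp (Complex.I * ∑ h, zr h * (x h : ℂ)) *
          ((max (K' - ∑ h, Real.exp (x h)) 0 : ℝ) : ℂ) ^ ((p.re : ℝ) : ℂ) := by
      intro K' x
      rw [Complex.ofReal_mul, Complex.ofReal_exp, Complex.ofReal_cpow (le_max_right _ _),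
        ← hIsum x]
    -- value of the integral of norms over slices
    have hnint : ∀ (K' : ℝ), 0 < K' →
        (∫ x : Fin d → ℝ, ‖Complex.exp (Complex.I * ∑ h, zt h * (x h : ℂ)) *
          ((max (K' - ∑ h, Real.exp (x h)) 0 : ℝ) : ℂ) ^ p‖)
        = K' ^ q * cR := by
      intro K' hK'
      have hreal := (IH ((p.re : ℝ) : ℂ) hpre K' hK' zr hzr).2
      have hRHS : (K' : ℂ) ^ (((p.re : ℝ) : ℂ) + Complex.I * ∑ h, zr h) *
          (Complex.Gamma (((p.re : ℝ) : ℂ) + 1) * (∏ h, Complex.Gamma (Complex.I * zr h)) /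
            Complex.Gamma (Complex.I * (∑ h, zr h) + ((p.re : ℝ) : ℂ) + 1))
          = ((K' ^ q * cR : ℝ) : ℂ) := by
        rw [hIsum1]
        have e1 : ((p.re : ℝ) : ℂ) + ((A : ℝ) : ℂ) = ((q : ℝ) : ℂ) := by
          rw [hq_def]; push_cast; ring
        have e2 : (((p.re : ℝ) : ℂ)) + 1 = (((p.re + 1 : ℝ)) : ℂ) := by push_cast; ring
        have e3 : ((A : ℝ) : ℂ) + ((p.re : ℝ) : ℂ) + 1 = (((A + p.re + 1 : ℝ)) : ℂ) := by
          push_cast; ring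
        rw [e1, ← Complex.ofReal_cpow hK'.le, e2, e3, Complex.Gamma_ofReal,
          Complex.Gamma_ofReal,
          Finset.prod_congr rfl (fun h _ => by rw [hIzr h, Complex.Gamma_ofReal]),
          ← Complex.ofReal_prod]
        rw [hcR_def]
        push_cast
        ring
      have key : ((∫ x : Fin d → ℝ, ‖Complex.exp (Complex.I * ∑ h, zt h * (x h : ℂ)) *
          ((max (K' - ∑ h, Real.exp (x h)) 0 : ℝ) : ℂ) ^ p‖ : ℝ) : ℂ)
          = ((K' ^ q * cR : ℝ) : ℂ) := by
        have hoR : (∫ x : Fin d → ℝ, ((‖Complex.exp (Complex.I * ∑ h, zt h * (x h : ℂ)) *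
            ((max (K' - ∑ h, Real.exp (x h)) 0 : ℝ) : ℂ) ^ p‖ : ℝ) : ℂ))
            = ((∫ x : Fin d → ℝ, ‖Complex.exp (Complex.I * ∑ h, zt h * (x h : ℂ)) *
            ((max (K' - ∑ h, Real.exp (x h)) 0 : ℝ) : ℂ) ^ p‖ : ℝ) : ℂ) := integral_ofReal
        rw [← hoR]
        have heq : ∀ x : Fin d → ℝ, ((‖Complex.exp (Complex.I * ∑ h, zt h * (x h : ℂ)) *
            ((max (K' - ∑ h, Real.exp (x h)) 0 : ℝ) : ℂ) ^ p‖ : ℝ) : ℂ)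
            = Complex.exp (Complex.I * ∑ h, zr h * (x h : ℂ)) *
              ((max (K' - ∑ h, Real.exp (x h)) 0 : ℝ) : ℂ) ^ ((p.re : ℝ) : ℂ) := by
          intro x
          rw [hnorm K' x, hcast K' x]
        rw [integral_congr_ae (Filter.Eventually.of_forall heq), hreal, hRHS]
      exact_mod_cast key
    -- H(y) := ∫ ‖g (y, x)‖ dx written in closed form
    have hH : ∀ y : ℝ, (∫ x : Fin d → ℝ, ‖g (y, x)‖)
        = cR * ‖Complex.exp (Complex.I * (z0 * (y : ℂ))) *
            ((max (K - Real.exp y) 0 : ℝ) : ℂ) ^ ((q : ℝ) : ℂ)‖ := by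
      intro y
      have hsplit : ∀ x : Fin d → ℝ, ‖g (y, x)‖
          = ‖Complex.exp (Complex.I * (z0 * (y : ℂ)))‖ *
            ‖Complex.exp (Complex.I * ∑ h, zt h * (x h : ℂ)) *
              ((max ((K - Real.exp y) - ∑ h, Real.exp (x h)) 0 : ℝ) : ℂ) ^ p‖ := by
        intro x
        rw [hg_def]
        exact norm_mul _ _
      rw [integral_congr_ae (Filter.Eventually.of_forall hsplit), integral_const_mul,
        norm_mul,
        Complex.norm_cpow_eq_rpow_re_of_nonneg (le_max_right _ _)
          (by simpa using hq.ne')]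
      simp only [Complex.ofReal_re]
      by_cases hK' : 0 < K - Real.exp y
      · rw [hnint _ hK', max_eq_left hK'.le]
        ring
      · have h0 : (fun x : Fin d → ℝ => ‖Complex.exp (Complex.I * ∑ h, zt h * (x h : ℂ)) *
            ((max ((K - Real.exp y) - ∑ h, Real.exp (x h)) 0 : ℝ) : ℂ) ^ p‖) = fun _ => 0 := by
          funext x
          rw [hzero _ (le_of_not_gt hK') x, norm_zero]
        rw [h0, integral_zero, max_eq_right (le_of_not_gt hK'), mul_zero]
        rw [Real.zero_rpow hq.ne']
        ring
    -- condition 2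
    have hlemA2 := lemA hK (hz 0) (show (0:ℝ) < (((q : ℝ) : ℂ)).re by simpa using hq)
    have hcond2 : Integrable (fun y : ℝ => ∫ x : Fin d → ℝ, ‖g (y, x)‖) := by
      rw [show (fun y : ℝ => ∫ x : Fin d → ℝ, ‖g (y, x)‖)
          = fun y : ℝ => cR * ‖Complex.exp (Complex.I * (z0 * (y : ℂ))) *
            ((max (K - Real.exp y) 0 : ℝ) : ℂ) ^ ((q : ℝ) : ℂ)‖ from funext hH]
      exact hlemA2.1.norm.const_mul cR
    -- joint integrability
    have hgint2 : Integrable g (volume.prod volume) := by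
      refine (integrable_prod_iff ?_).2 ⟨Filter.Eventually.of_forall hcond1, hcond2⟩
      rw [← Measure.volume_eq_prod]
      exact hcont.aestronglyMeasurable
    have hgint : Integrable g := by
      rw [Measure.volume_eq_prod]
      exact hgint2
    -- integrability of the original function
    have hfint : Integrable (fun x : Fin (d+1) → ℝ =>
        Complex.exp (Complex.I * ∑ h, z h * (x h : ℂ)) *
          ((max (K - ∑ h, Real.exp (x h)) 0 : ℝ) : ℂ) ^ p) := by
      have := (hmp.integrable_comp_emb
        (MeasurableEquiv.measurableEmbedding _)).1 (by
          rw [show ((fun x : Fin (d+1) → ℝ =>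
            Complex.exp (Complex.I * ∑ h, z h * (x h : ℂ)) *
              ((max (K - ∑ h, Real.exp (x h)) 0 : ℝ) : ℂ) ^ p) ∘
              (MeasurableEquiv.piFinSuccAbove (fun _ : Fin (d+1) => ℝ) 0).symm) = g
            from funext hcomp]
          exact hgint)
      exact this
    refine ⟨hfint, ?_⟩
    -- facts about the exponent p + I * S
    have hSim : S.im = -A := by
      rw [hS_def, Complex.im_sum, hA_def, ← Finset.sum_neg_distrib]
      exact Finset.sum_congr rfl fun h _ => by simp [ha_def]
    have hpS : (0:ℝ) < (p + Complex.I * S).re := by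
      simp only [Complex.add_re, Complex.mul_re, Complex.I_re, Complex.I_im, zero_mul,
        one_mul, zero_sub, hSim]
      simp only [neg_neg]
      linarith
    have hpS0 : p + Complex.I * S ≠ 0 := fun hc => by rw [hc] at hpS; simp at hpS
    set Cd : ℂ := Complex.Gamma (p + 1) * (∏ h, Complex.Gamma (Complex.I * zt h)) /
        Complex.Gamma (Complex.I * S + p + 1) with hCd_def
    -- inner integral value
    have hinner_val : ∀ y : ℝ, (∫ x : Fin d → ℝ, g (y, x))
        = (Complex.exp (Complex.I * (z0 * (y : ℂ))) *
            ((max (K - Real.exp y) 0 : ℝ) : ℂ) ^ (p + Complex.I * S)) * Cd := by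
      intro y
      by_cases hK' : 0 < K - Real.exp y
      · simp only [hg_def]
        rw [integral_const_mul, (IH p hp _ hK' zt hzt).2, max_eq_left hK'.le,
          ← hS_def, ← hCd_def]
        ring
      · have h0 : (fun x : Fin d → ℝ => g (y, x)) = fun _ => 0 := funext fun x => by
          simp only [hg_def]
          rw [hzero _ (le_of_not_gt hK') x, mul_zero]
        rw [h0, integral_zero, max_eq_right (le_of_not_gt hK'), Complex.ofReal_zero,
          Complex.zero_cpow hpS0, mul_zero, zero_mul]
    -- assemble
    have hval0 : (∫ x : Fin (d+1) → ℝ,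
        Complex.exp (Complex.I * ∑ h, z h * (x h : ℂ)) *
          ((max (K - ∑ h, Real.exp (x h)) 0 : ℝ) : ℂ) ^ p)
        = ∫ q : ℝ × (Fin d → ℝ), g q := by
      rw [← hmp.integral_comp (MeasurableEquiv.measurableEmbedding _)]
      exact integral_congr_ae (Filter.Eventually.of_forall hcomp)
    rw [hval0, Measure.volume_eq_prod, integral_prod g hgint2,
      integral_congr_ae (Filter.Eventually.of_forall hinner_val), integral_mul_const,
      (lemA hK (hz 0) hpS).2]
    -- final algebra
    rw [Fin.sum_univ_succ (f := fun h => z h), Fin.prod_univ_succ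
      (f := fun h => Complex.Gamma (Complex.I * z h))]
    simp only [← hz0_def, ← hzt_def, ← hS_def, hCd_def]
    have ha0 : (0:ℝ) < -(z0.im) := by rw [hz0_def]; linarith [hz 0]
    have hG1 : Complex.Gamma (Complex.I * S + p + 1) ≠ 0 := by
      apply Complex.Gamma_ne_zero_of_re_pos
      simp only [Complex.add_re, Complex.mul_re, Complex.I_re, Complex.I_im, zero_mul,
        one_mul, zero_sub, hSim, Complex.one_re]
      linarith
    have hG2 : Complex.Gamma (Complex.I * (z0 + S) + p + 1) ≠ 0 := by
      apply Complex.Gamma_ne_zero_of_re_pos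
      simp only [Complex.add_re, Complex.mul_re, Complex.I_re, Complex.I_im, zero_mul,
        one_mul, zero_sub, Complex.add_im, hSim, Complex.one_re]
      linarith
    have e1 : p + Complex.I * S + Complex.I * z0 = p + Complex.I * (z0 + S) := by ring
    have e2 : p + Complex.I * S + 1 = Complex.I * S + p + 1 := by ring
    have e3 : Complex.I * z0 + (p + Complex.I * S) + 1 = Complex.I * (z0 + S) + p + 1 := by
      ring
    rw [e1, e2, e3]
    field_simp
    ring

end BasketAux

/-- Fourier transform of the arithmetic basket put payoff
`w(x) = max(K - Σ_h e^{x_h}, 0)` for `Im z_h < 0`. -/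
theorem basket_put_fourier
    (d : ℕ) (K : ℝ) (hK : 0 < K) (z : Fin d → ℂ) (hz : ∀ h, (z h).im < 0) :
    Integrable (fun x : Fin d → ℝ =>
      Complex.exp (Complex.I * ∑ h, z h * (x h : ℂ)) *
        ((max (K - ∑ h, Real.exp (x h)) 0 : ℝ) : ℂ)) ∧
    (∫ x : Fin d → ℝ, Complex.exp (Complex.I * ∑ h, z h * (x h : ℂ)) *
        ((max (K - ∑ h, Real.exp (x h)) 0 : ℝ) : ℂ)) =
      Complex.exp ((1 + Complex.I * ∑ h, z h) * (Real.log K : ℂ)) *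
        (∏ h, Complex.Gamma (Complex.I * z h)) /
        Complex.Gamma (Complex.I * (∑ h, z h) + 2) := by
  have h := lemB d 1 (by norm_num) K hK z hz
  have hfun : (fun x : Fin d → ℝ =>
      Complex.exp (Complex.I * ∑ h, z h * (x h : ℂ)) *
        ((max (K - ∑ h, Real.exp (x h)) 0 : ℝ) : ℂ) ^ (1 : ℂ))
      = fun x : Fin d → ℝ =>
      Complex.exp (Complex.I * ∑ h, z h * (x h : ℂ)) *
        ((max (K - ∑ h, Real.exp (x h)) 0 : ℝ) : ℂ) := by
    funext x
    rw [Complex.cpow_one]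
  refine ⟨hfun ▸ h.1, ?_⟩
  have h2 := h.2
  rw [hfun] at h2
  rw [h2]
  have hKne : ((K : ℝ) : ℂ) ≠ 0 := Complex.ofReal_ne_zero.2 hK.ne'
  rw [Complex.cpow_def_of_ne_zero hKne, Complex.ofReal_log hK.le]
  have hΓ2 : Complex.Gamma (1 + 1) = 1 := by
    rw [Complex.Gamma_add_one 1 one_ne_zero, Complex.Gamma_one, mul_one]
  rw [hΓ2]
  have e1 : Complex.I * (∑ h, z h) + 1 + 1 = Complex.I * (∑ h, z h) + 2 := by ring
  rw [e1, one_mul, mul_comm (Complex.log (K : ℂ)), mul_div_assoc]
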